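/- Let x : I → ℝⁿ be a smooth immersed curve, cr : I → ℝ, and ξ(s) = o + x(s) + ½(x(s),x(s))q its Euclidean light-cone lift. A curve x̂ : I → ℝⁿ with Euclidean lift ξ̂ is a Ribaucour transform of x with tangent cross ratio cr if and only if (d/ds)ξ̂ − (2cr/(ξ',ξ'))·(ξ∧ξ')(ξ̂) is pointwise parallel to ξ̂, where (ξ∧ξ')(y) = (y,ξ)ξ' − (y,ξ')ξ. -/

import Mathlib

noncomputable section
open CliffordAlgebra

/-- Euclidean n-space. -/
abbrev E (n : ℕ) := EuclideanSpace ℝ (Fin n)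

/-- The quadratic form of the standard inner product on ℝⁿ. -/
def QE (n : ℕ) : QuadraticForm ℝ (E n) := LinearMap.BilinMap.toQuadraticMap (innerₗ (E n))

/-- The Clifford-algebra inverse of a vector: v⁻¹ = v / |v|². -/
def cinv {n : ℕ} (v : E n) : CliffordAlgebra (QE n) := (QE n v)⁻¹ • ι (QE n) v

/-- The Minkowski space ℝ^{n+1,1} modelled as ℝ·o ⊕ ℝⁿ ⊕ ℝ·q, a vector (a, v, b)
standing for a·o + v + b·q with o, q lightlike and (o,q) = −1. -/
abbrev M (n : ℕ) := ℝ × E n × ℝ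

/-- The Minkowski bilinear form of signature (n+1,1). -/
def BM (n : ℕ) : LinearMap.BilinForm ℝ (M n) :=
  LinearMap.mk₂ ℝ (fun u v => (inner ℝ u.2.1 v.2.1 : ℝ) - u.1 * v.2.2 - v.1 * u.2.2)
    (by intros; simp [inner_add_left]; ring)
    (by intros; simp [inner_smul_left]; ring)
    (by intros; simp [inner_add_right]; ring)
    (by intros; simp [inner_smul_right]; ring)

/-- The point at the origin o. -/
def oM (n : ℕ) : M n := (1, 0, 0)

/-- The point at infinity q. -/
def qM (n : ℕ) : M n := (0, 0, 1)

/-- The Euclidean lift ξ = o + x + ½(x,x)q of x ∈ ℝⁿ into the light cone. -/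
def lift {n : ℕ} (x : E n) : M n := (1, x, (inner ℝ x x : ℝ) / 2)

/-- The derivative of the Euclidean lift along a curve: ξ' = x' + (x,x')q. -/
def liftD {n : ℕ} (x dx : E n) : M n := (0, dx, (inner ℝ x dx : ℝ))

lemma QE_apply {n : ℕ} (v : E n) : QE n v = (inner ℝ v v : ℝ) := rfl

lemma QE_ne_zero {n : ℕ} {v : E n} (hv : v ≠ 0) : QE n v ≠ 0 := by
  rw [QE_apply]
  exact fun h => hv (inner_self_eq_zero.mp h)

lemma iotaE_inj {n : ℕ} : Function.Injective (ι (QE n)) := by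
  intro a b h
  have h2 := congrArg (equivExterior (QE n)) h
  simp only [equivExterior, changeFormEquiv_apply, changeForm_ι] at h2
  exact (ExteriorAlgebra.ι_inj ℝ a b).mp h2

lemma polarE {n : ℕ} (a b : E n) :
    QuadraticMap.polar (QE n) a b = 2 * (inner ℝ a b : ℝ) := by
  rw [QE, LinearMap.BilinMap.polar_toQuadraticMap]
  simp only [innerₗ_apply_apply]
  rw [real_inner_comm b a]; ring

lemma ι_mul_cinv {n : ℕ} {v : E n} (hv : v ≠ 0) : ι (QE n) v * cinv v = 1 := by
  rw [cinv, mul_smul_comm, ι_sq_scalar, Algebra.algebraMap_eq_smul_one, smul_smul,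
    inv_mul_cancel₀ (QE_ne_zero hv), one_smul]

lemma cinv_mul_ι {n : ℕ} {v : E n} (hv : v ≠ 0) : cinv v * ι (QE n) v = 1 := by
  rw [cinv, smul_mul_assoc, ι_sq_scalar, Algebra.algebraMap_eq_smul_one, smul_smul,
    inv_mul_cancel₀ (QE_ne_zero hv), one_smul]

lemma sandwich {n : ℕ} (δ v : E n) :
    ι (QE n) δ * ι (QE n) v * ι (QE n) δ
      = (2 * (inner ℝ δ v : ℝ)) • ι (QE n) δ - (inner ℝ δ δ : ℝ) • ι (QE n) v := by
  have h : ι (QE n) δ * ι (QE n) v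
      = algebraMap ℝ _ (2 * (inner ℝ δ v : ℝ)) - ι (QE n) v * ι (QE n) δ := by
    rw [← polarE]; exact eq_sub_of_add_eq (ι_mul_ι_add_swap δ v)
  rw [h, sub_mul, mul_assoc, ι_sq_scalar, QE_apply, ← Algebra.smul_def,
    ← Algebra.commutes, ← Algebra.smul_def]

lemma clifford_iff {n : ℕ} (u v δ : E n) (hu : u ≠ 0) (hδ : δ ≠ 0) (c : ℝ) :
    ι (QE n) u * cinv δ * ι (QE n) v * cinv δ = algebraMap ℝ _ c ↔
    v = (c / (inner ℝ u u : ℝ)) •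
        ((2 * (inner ℝ δ u : ℝ)) • δ - (inner ℝ δ δ : ℝ) • u) := by
  set w : E n := (QE n u)⁻¹ • ((2 * (inner ℝ δ u : ℝ)) • δ - (inner ℝ δ δ : ℝ) • u) with hw
  have hX : ι (QE n) δ * cinv u * ι (QE n) δ = ι (QE n) w := by
    rw [cinv, mul_smul_comm, smul_mul_assoc, sandwich, hw]
    simp only [map_smul, map_sub]
  have hcw : (c / (inner ℝ u u : ℝ)) •
        ((2 * (inner ℝ δ u : ℝ)) • δ - (inner ℝ δ δ : ℝ) • u) = c • w := by
    rw [hw, smul_smul, div_eq_mul_inv, QE_apply]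
  have key : ι (QE n) v = c • ι (QE n) w ↔
      ι (QE n) u * cinv δ * ι (QE n) v * cinv δ = algebraMap ℝ _ c := by
    constructor
    · intro h
      rw [h, ← hX]
      simp only [mul_smul_comm, smul_mul_assoc, mul_assoc]
      rw [← mul_assoc (cinv δ) (ι (QE n) δ), cinv_mul_ι hδ, one_mul,
        ι_mul_cinv hδ, mul_one, ι_mul_cinv hu, ← Algebra.algebraMap_eq_smul_one]
    · intro h
      have gen : ι (QE n) δ * cinv u * (ι (QE n) u * cinv δ * ι (QE n) v * cinv δ)
          * ι (QE n) δ = ι (QE n) v := by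
        simp only [mul_assoc]
        rw [cinv_mul_ι hδ, mul_one, ← mul_assoc (cinv u), cinv_mul_ι hu, one_mul,
          ← mul_assoc, ι_mul_cinv hδ, one_mul]
      rw [← gen, h, ← Algebra.commutes, mul_assoc, ← Algebra.smul_def, hX]
  rw [hcw, ← key, ← map_smul]
  exact ⟨fun h => iotaE_inj h, fun h => congrArg _ h⟩

lemma mink_iff {n : ℕ} (a b u v : E n) (c : ℝ) (hu : u ≠ 0) :
    (∃ lam : ℝ,
        liftD b v
          - (2 * c / BM n (liftD a u) (liftD a u)) •
              (BM n (lift b) (lift a) • liftD a u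
                - BM n (lift b) (liftD a u) • lift a)
          = lam • lift b)
    ↔ v = (c / (inner ℝ u u : ℝ)) •
        ((2 * (inner ℝ (a - b) u : ℝ)) • (a - b) - (inner ℝ (a - b) (a - b) : ℝ) • u) := by
  have huu : (inner ℝ u u : ℝ) ≠ 0 := fun h => hu (inner_self_eq_zero.mp h)
  unfold BM _root_.lift liftD
  simp only [LinearMap.mk₂_apply, Prod.smul_mk, Prod.mk_sub_mk, Prod.mk.injEq,
    smul_eq_mul]
  constructor
  · rintro ⟨lam, h1, h2, h3⟩
    have hlam : lam = 2 * c / (inner ℝ u u : ℝ) * ((inner ℝ b u : ℝ) - (inner ℝ a u : ℝ)) := by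
      linear_combination -h1
    rw [sub_eq_iff_eq_add] at h2
    rw [h2, hlam]
    simp only [inner_sub_left, inner_sub_right]
    simp only [real_inner_comm]
    match_scalars <;> field_simp <;> ring
  · intro hv
    refine ⟨2 * c / (inner ℝ u u : ℝ) * ((inner ℝ b u : ℝ) - (inner ℝ a u : ℝ)), by ring, ?_, ?_⟩
    · rw [hv]
      simp only [inner_sub_left, inner_sub_right]
      simp only [real_inner_comm]
      match_scalars <;> field_simp <;> ring
    · rw [hv]
      simp only [real_inner_smul_right, inner_sub_right, inner_sub_left]
      simp only [real_inner_comm]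
      field_simp
      ring

/-- Lemma 2.3: x̂ is a Ribaucour transform of x with tangent cross ratio
cr iff, for the Euclidean lifts ξ, ξ̂, D/ds ξ̂ = ξ̂' − (2cr/(ξ',ξ'))(ξ∧ξ')(ξ̂) is
pointwise parallel to ξ̂. -/
theorem ribaucour_linear_system {n : ℕ} (x xh dx dxh : ℝ → E n) (cr : ℝ → ℝ)
    (hx : ∀ s, HasDerivAt x (dx s) s) (hxh : ∀ s, HasDerivAt xh (dxh s) s)
    (hne : ∀ s, x s ≠ xh s) (himm : ∀ s, dx s ≠ 0) (himm' : ∀ s, dxh s ≠ 0) :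
    (∀ s, ι (QE n) (dx s) * cinv (x s - xh s) * ι (QE n) (dxh s) * cinv (x s - xh s)
        = algebraMap ℝ _ (cr s))
    ↔ (∀ s, ∃ lam : ℝ,
        liftD (xh s) (dxh s)
          - (2 * cr s / BM n (liftD (x s) (dx s)) (liftD (x s) (dx s))) •
              (BM n (lift (xh s)) (lift (x s)) • liftD (x s) (dx s)
                - BM n (lift (xh s)) (liftD (x s) (dx s)) • lift (x s))
          = lam • lift (xh s)) := by
  constructor
  · intro h s
    exact (mink_iff (x s) (xh s) (dx s) (dxh s) (cr s) (himm s)).mpr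
      ((clifford_iff (dx s) (dxh s) (x s - xh s) (himm s)
        (sub_ne_zero.mpr (hne s)) (cr s)).mp (h s))
  · intro h s
    exact (clifford_iff (dx s) (dxh s) (x s - xh s) (himm s)
        (sub_ne_zero.mpr (hne s)) (cr s)).mpr
      ((mink_iff (x s) (xh s) (dx s) (dxh s) (cr s) (himm s)).mp (h s))
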